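/- Let a_n = 2^(2n+2), b_n = 2^(2n), a'_n = 2^(2n+1), b'_n = 2^(2n-1). Define H = { x ∈ ℝ : ∑_{n≥1} (a_n/b_n)·‖a_1⋯a_{n-1} x‖ < ∞ } and H' = { x ∈ ℝ : ∑_{n≥1} (a'_n/b'_n)·‖a'_1⋯a'_{n-1} x‖ < ∞ }, where ‖y‖ = dist(y, ℤ). Then every real number x can be written as x = y + z with y ∈ H and z ∈ H'. -/

import Mathlib

/-- Distance from a real number to the nearest integer. -/
noncomputable def distToInt (y : ℝ) : ℝ := |y - round y|

/-- The subgroup `H = { x : ∑ (a n / b n) * ‖a 1 ⋯ a (n-1) * x‖ < ∞ }` associated to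
sequences `a b : ℕ → ℝ` (indexed from 1). -/
def Hgroup (a b : ℕ → ℝ) : Set ℝ :=
  {x : ℝ | Summable fun n : ℕ =>
    (a (n + 1) / b (n + 1)) * distToInt ((∏ i ∈ Finset.Icc 1 n, a i) * x)}

open scoped Classical

lemma distToInt_le_half (t : ℝ) : distToInt t ≤ 1/2 := abs_sub_round t

lemma distToInt_nonneg (t : ℝ) : 0 ≤ distToInt t := abs_nonneg _

lemma distToInt_int_add (a : ℤ) (t : ℝ) : distToInt ((a : ℝ) + t) = distToInt t := by
  unfold distToInt
  rw [round_intCast_add]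
  push_cast
  ring_nf

lemma distToInt_le_abs (t : ℝ) : distToInt t ≤ |t| := by
  rcases le_or_gt (1/2) |t| with h | h
  · exact (distToInt_le_half t).trans h
  · have hr : round t = 0 := by
      rw [round_eq, Int.floor_eq_zero_iff]
      rw [abs_lt] at h
      constructor <;> simp <;> linarith [h.1, h.2]
    simp [distToInt, hr]

/-- binary digit of `x` at position `k ≥ 1`. -/
noncomputable def dig (x : ℝ) (k : ℕ) : ℤ := ⌊(2:ℝ)^k * x⌋ - 2 * ⌊(2:ℝ)^(k-1) * x⌋

lemma dig_nonneg (x : ℝ) {k : ℕ} (hk : 1 ≤ k) : 0 ≤ dig x k := by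
  unfold dig
  have h2 : (2:ℝ)^k = 2 * (2:ℝ)^(k-1) := by
    rw [← pow_succ']
    congr 1
    omega
  rw [h2, sub_nonneg]
  apply Int.le_floor.mpr
  push_cast
  nlinarith [Int.floor_le ((2:ℝ)^(k-1) * x)]

lemma dig_le_one (x : ℝ) {k : ℕ} (hk : 1 ≤ k) : dig x k ≤ 1 := by
  unfold dig
  have h2 : (2:ℝ)^k = 2 * (2:ℝ)^(k-1) := by
    rw [← pow_succ']
    congr 1
    omega
  have hlt : ⌊(2:ℝ)^k * x⌋ < 2 * ⌊(2:ℝ)^(k-1) * x⌋ + 2 := by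
    apply Int.floor_lt.mpr
    push_cast
    rw [h2, mul_assoc]
    nlinarith [Int.lt_floor_add_one ((2:ℝ)^(k-1) * x)]
  omega

/-- the set of digit positions routed to `z`. -/
def Wset (k : ℕ) : Prop := ∃ n : ℕ, 1 ≤ n ∧ n^2 + 3*n < k ∧ k ≤ n^2 + 4*n

lemma Wset_one_le {k : ℕ} (h : Wset k) : 1 ≤ k := by
  obtain ⟨n, hn, h1, h2⟩ := h; omega

lemma Wset_of {n k : ℕ} (hn : 1 ≤ n) (h1 : n^2 + 3*n < k) (h2 : k ≤ n^2 + 4*n) :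
    Wset k := ⟨n, hn, h1, h2⟩

lemma not_Wset {n k : ℕ} (hn : 1 ≤ n) (h1 : n^2 + 2*n < k) (h2 : k ≤ n^2 + 3*n) :
    ¬ Wset k := by
  rintro ⟨j, hj, hj1, hj2⟩
  rcases le_or_gt n j with h | h
  · have : n^2 + 3*n ≤ j^2 + 3*j := by nlinarith
    omega
  · have hj1n : j + 1 ≤ n := h
    have : (j+1)^2 + 2*(j+1) ≤ n^2 + 2*n := by nlinarith
    nlinarith

noncomputable def gfun (x : ℝ) (k : ℕ) : ℝ := if Wset k then (dig x k : ℝ) / 2^k else 0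

lemma gfun_nonneg (x : ℝ) (k : ℕ) : 0 ≤ gfun x k := by
  unfold gfun
  split
  · next h =>
      have := dig_nonneg x (Wset_one_le h)
      positivity
  · exact le_refl _
  
lemma gfun_le (x : ℝ) (k : ℕ) : gfun x k ≤ (1/2)^k := by
  unfold gfun
  split
  · next h =>
      have := dig_le_one x (Wset_one_le h)
      rw [div_pow, one_pow, div_le_div_iff₀ (by positivity) (by positivity)]
      have : (dig x k : ℝ) ≤ 1 := by exact_mod_cast this
      nlinarith [pow_pos (by norm_num : (0:ℝ) < 2) k]
  · positivity

lemma summable_gfun (x : ℝ) : Summable (gfun x) := by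
  apply Summable.of_nonneg_of_le (gfun_nonneg x) (gfun_le x)
  exact summable_geometric_of_lt_one (by norm_num) (by norm_num)

lemma tele (x : ℝ) (a : ℕ) : ∀ b, a ≤ b →
    ∑ k ∈ Finset.Ioc a b, (dig x k : ℝ) / 2^k
      = (⌊(2:ℝ)^b * x⌋ : ℝ) / 2^b - (⌊(2:ℝ)^a * x⌋ : ℝ) / 2^a := by
  intro b
  induction b with
  | zero => intro h; interval_cases a; simp
  | succ b ih =>
    intro h
    rcases Nat.lt_or_ge a (b+1) with h' | h'
    · have hab : a ≤ b := by omega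
      rw [Finset.sum_Ioc_succ_top (by omega), ih hab]
      have hd : (dig x (b+1) : ℝ) = ⌊(2:ℝ)^(b+1) * x⌋ - 2 * ⌊(2:ℝ)^b * x⌋ := by
        unfold dig; push_cast; simp
      rw [hd]
      have h2 : (2:ℝ)^(b+1) = 2 * 2^b := by ring
      field_simp
      ring
    · have : a = b + 1 := by omega
      subst this
      simp

lemma two_pow_half_pow (m s : ℕ) : (2:ℝ)^m * (1/2)^(m+s) = (1/2)^s := by
  rw [pow_add, ← mul_assoc, ← mul_pow]
  norm_num

lemma tail_le (x : ℝ) (m n : ℕ) :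
    |∑' j : ℕ, (2:ℝ)^m * gfun x (j+(m+n+1))| ≤ (1/2)^n := by
  set N := m+n+1 with hN
  have hs : Summable (fun j : ℕ => (2:ℝ)^m * gfun x (j+N)) :=
    (((summable_gfun x).comp_injective (add_left_injective N)).mul_left _)
  have hs' : Summable (fun j : ℕ => ((1:ℝ)/2)^(n+1) * (1/2)^j) :=
    (summable_geometric_of_lt_one (by norm_num) (by norm_num)).mul_left _
  have hle : ∀ j : ℕ, (2:ℝ)^m * gfun x (j+N) ≤ (1/2)^(n+1) * (1/2)^j := by
    intro j
    have h1 : (2:ℝ)^m * gfun x (j+N) ≤ (2:ℝ)^m * (1/2)^(j+N) := by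
      have := gfun_le x (j+N)
      nlinarith [pow_pos (by norm_num : (0:ℝ) < 2) m]
    have h2 : (2:ℝ)^m * (1/2)^(j+N) = (1/2)^(n+1) * (1/2)^j := by
      have : j + N = m + (n+1+j) := by omega
      rw [this, two_pow_half_pow, pow_add]
    linarith
  have h0 : 0 ≤ ∑' j : ℕ, (2:ℝ)^m * gfun x (j+N) := by
    apply tsum_nonneg
    intro j
    have := gfun_nonneg x (j+N)
    positivity
  rw [abs_of_nonneg h0]
  calc ∑' j : ℕ, (2:ℝ)^m * gfun x (j+N) ≤ ∑' j : ℕ, ((1:ℝ)/2)^(n+1) * (1/2)^j :=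
        Summable.tsum_le_tsum hle hs hs'
    _ = (1/2)^(n+1) * 2 := by rw [tsum_mul_left, tsum_geometric_two]
    _ = (1/2)^n := by ring

lemma split (x : ℝ) (m n : ℕ) :
    ∃ A : ℤ, (2:ℝ)^m * (∑' k, gfun x k) =
      (A : ℝ) + (∑ k ∈ Finset.Ioc m (m+n), (2:ℝ)^m * gfun x k)
        + ∑' j : ℕ, (2:ℝ)^m * gfun x (j+(m+n+1)) := by
  have hs : Summable (fun k : ℕ => (2:ℝ)^m * gfun x k) := (summable_gfun x).mul_left _
  have hsplit := Summable.sum_add_tsum_nat_add (m+n+1) hs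
  refine ⟨∑ k ∈ Finset.range (m+1), if Wset k then dig x k * 2^(m-k) else 0, ?_⟩
  have hrange : Finset.range (m+n+1) = Finset.range (m+1) ∪ Finset.Ioc m (m+n) := by
    ext k
    simp only [Finset.mem_range, Finset.mem_union, Finset.mem_Ioc]
    omega
  have hdisj : Disjoint (Finset.range (m+1)) (Finset.Ioc m (m+n)) := by
    rw [Finset.disjoint_left]
    intro k hk hk'
    simp only [Finset.mem_range] at hk
    simp only [Finset.mem_Ioc] at hk'
    omega
  have hA : ((∑ k ∈ Finset.range (m+1), if Wset k then dig x k * 2^(m-k) else 0 : ℤ) : ℝ)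
      = ∑ k ∈ Finset.range (m+1), (2:ℝ)^m * gfun x k := by
    push_cast
    apply Finset.sum_congr rfl
    intro k hk
    simp only [Finset.mem_range] at hk
    unfold gfun
    split
    · have hk' : k ≤ m := by omega
      have : (2:ℝ)^m = 2^(m-k) * 2^k := by rw [← pow_add]; congr 1; omega
      rw [this]
      field_simp
    · simp
  rw [← tsum_mul_left, ← hsplit, hrange, Finset.sum_union hdisj, hA]

lemma estZ (x : ℝ) {n : ℕ} (hn : 1 ≤ n) :
    distToInt ((2:ℝ)^(n^2+2*n) * ∑' k, gfun x k) ≤ (1/2)^n := by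
  obtain ⟨A, hA⟩ := split x (n^2+2*n) n
  have hP : ∑ k ∈ Finset.Ioc (n^2+2*n) (n^2+2*n+n), (2:ℝ)^(n^2+2*n) * gfun x k = 0 := by
    apply Finset.sum_eq_zero
    intro k hk
    simp only [Finset.mem_Ioc] at hk
    have : ¬ Wset k := not_Wset hn (by omega) (by omega)
    unfold gfun
    rw [if_neg this, mul_zero]
  rw [hP, add_zero] at hA
  rw [hA, distToInt_int_add]
  exact (distToInt_le_abs _).trans (tail_le x (n^2+2*n) n)

lemma estY (x : ℝ) {n : ℕ} (hn : 1 ≤ n) :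
    distToInt ((2:ℝ)^(n^2+3*n) * (x - ∑' k, gfun x k)) ≤ 2 * (1/2)^n := by
  set m := n^2+3*n with hm
  obtain ⟨A, hA⟩ := split x m n
  set T := ∑' j : ℕ, (2:ℝ)^m * gfun x (j+(m+n+1)) with hT
  have hP : ∑ k ∈ Finset.Ioc m (m+n), (2:ℝ)^m * gfun x k
      = (⌊(2:ℝ)^(m+n) * x⌋ : ℝ)/2^n - (⌊(2:ℝ)^m * x⌋ : ℝ) := by
    have h1 : ∀ k ∈ Finset.Ioc m (m+n),
        (2:ℝ)^m * gfun x k = 2^m * ((dig x k : ℝ)/2^k) := by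
      intro k hk
      simp only [Finset.mem_Ioc] at hk
      unfold gfun
      rw [if_pos (Wset_of hn (by omega) (by omega))]
    rw [Finset.sum_congr rfl h1, ← Finset.mul_sum, tele x m (m+n) (by omega)]
    have h2 : (2:ℝ)^(m+n) = 2^m * 2^n := pow_add 2 m n
    have hm0 : (0:ℝ) < 2^m := by positivity
    have hn0 : (0:ℝ) < 2^n := by positivity
    field_simp
    ring
  have key : (2:ℝ)^m * (x - ∑' k, gfun x k)
      = ((⌊(2:ℝ)^m * x⌋ - A : ℤ) : ℝ) + (Int.fract ((2:ℝ)^(m+n) * x)/2^n - T) := by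
    set F := Int.fract ((2:ℝ)^(m+n) * x) with hF
    have hfr : (⌊(2:ℝ)^(m+n) * x⌋ : ℝ) = 2^(m+n)*x - F := by
      rw [hF, Int.self_sub_fract]
    have h2 : (2:ℝ)^(m+n) = 2^m * 2^n := pow_add 2 m n
    have hn0 : (0:ℝ) < 2^n := by positivity
    rw [mul_sub, hA, hP, hfr]
    push_cast
    rw [h2]
    field_simp
    ring
  rw [key, distToInt_int_add]
  have h2 : |Int.fract ((2:ℝ)^(m+n) * x)/2^n| ≤ (1/2)^n := by
    rw [abs_of_nonneg (div_nonneg (Int.fract_nonneg _) (by positivity)), div_pow, one_pow]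
    gcongr
    exact le_of_lt (Int.fract_lt_one _)
  have h3 := tail_le x m n
  have h4 := abs_sub (Int.fract ((2:ℝ)^(m+n) * x)/2^n) T
  calc distToInt (Int.fract ((2:ℝ)^(m+n) * x)/2^n - T)
      ≤ |Int.fract ((2:ℝ)^(m+n) * x)/2^n - T| := distToInt_le_abs _
    _ ≤ |Int.fract ((2:ℝ)^(m+n) * x)/2^n| + |T| := abs_sub _ _
    _ ≤ (1/2)^n + (1/2)^n := add_le_add h2 h3
    _ = 2 * (1/2)^n := by ring


/-- For `a n = 2^(2n+2)`, `b n = 2^(2n)`, `a' n = 2^(2n+1)`, `b' n = 2^(2n-1)`,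
every real `x` can be written as `x = y + z` with `y ∈ H` and `z ∈ H'`. -/
theorem stmt_1 (a b a' b' : ℕ → ℝ)
    (ha : ∀ n, a n = 2 ^ (2 * n + 2)) (hb : ∀ n, b n = 2 ^ (2 * n))
    (ha' : ∀ n, a' n = 2 ^ (2 * n + 1)) (hb' : ∀ n, 1 ≤ n → b' n = 2 ^ (2 * n - 1)) :
    ∀ x : ℝ, ∃ y z : ℝ, y ∈ Hgroup a b ∧ z ∈ Hgroup a' b' ∧ x = y + z := by
  intro x
  refine ⟨x - ∑' k, gfun x k, ∑' k, gfun x k, ?_, ?_, by ring⟩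
  · simp only [Hgroup, Set.mem_setOf_eq]
    have hprod : ∀ n, ∏ i ∈ Finset.Icc 1 n, a i = 2^(n^2+3*n) := by
      intro n
      induction n with
      | zero => simp
      | succ n ih =>
        rw [Finset.prod_Icc_succ_top (by omega), ih, ha, ← pow_add]
        congr 1
        ring
    have hr : ∀ n : ℕ, a (n+1) / b (n+1) = 4 := by
      intro n
      have h4 : (2:ℝ)^(2*(n+1)+2) = 2^(2*(n+1)) * 4 := by rw [pow_add]; norm_num
      rw [ha, hb, h4, mul_comm, mul_div_assoc, div_self (by positivity), mul_one]
    apply Summable.of_nonneg_of_le (f := fun n => 8 * (1/2:ℝ)^n)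
    · intro n
      rw [hr]
      have := distToInt_nonneg ((∏ i ∈ Finset.Icc 1 n, a i) * (x - ∑' k, gfun x k))
      linarith
    · intro n
      rw [hr, hprod]
      rcases Nat.eq_zero_or_pos n with rfl | hn
      · have := distToInt_le_half ((2:ℝ)^(0^2+3*0) * (x - ∑' k, gfun x k))
        norm_num
        norm_num at this
        linarith
      · have := estY x hn
        have h8 : 4 * (2 * (1/2:ℝ)^n) = 8 * (1/2)^n := by ring
        nlinarith
    · exact (summable_geometric_of_lt_one (by norm_num) (by norm_num)).mul_left _
  · simp only [Hgroup, Set.mem_setOf_eq]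
    have hprod : ∀ n, ∏ i ∈ Finset.Icc 1 n, a' i = 2^(n^2+2*n) := by
      intro n
      induction n with
      | zero => simp
      | succ n ih =>
        rw [Finset.prod_Icc_succ_top (by omega), ih, ha', ← pow_add]
        congr 1
        ring
    have hr : ∀ n : ℕ, a' (n+1) / b' (n+1) = 4 := by
      intro n
      have hbn : 2*(n+1)-1 = 2*n+1 := by omega
      have h4 : (2:ℝ)^(2*(n+1)+1) = 2^(2*n+1) * 4 := by
        rw [show 2*(n+1)+1 = (2*n+1)+2 by omega, pow_add]; norm_num
      rw [ha', hb' (n+1) (by omega), hbn, h4, mul_comm, mul_div_assoc,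
        div_self (by positivity), mul_one]
    apply Summable.of_nonneg_of_le (f := fun n => 4 * (1/2:ℝ)^n)
    · intro n
      rw [hr]
      have := distToInt_nonneg ((∏ i ∈ Finset.Icc 1 n, a' i) * (∑' k, gfun x k))
      linarith
    · intro n
      rw [hr, hprod]
      rcases Nat.eq_zero_or_pos n with rfl | hn
      · have := distToInt_le_half ((2:ℝ)^(0^2+2*0) * (∑' k, gfun x k))
        norm_num
        norm_num at this
        linarith
      · have := estZ x hn
        linarith
    · exact (summable_geometric_of_lt_one (by norm_num) (by norm_num)).mul_left _
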